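/- Let L > 2π, let ω ∈ (4π²/L², 1), and let φ: ℝ → ℝ be a smooth, even, nonconstant, L-periodic solution of -φ'' + ωφ - φ⁵ = 0 having exactly two zeros in [0,L). Then every C² L-periodic function f satisfying -f'' + ωf - 5φ⁴f = λf for some λ < 0 is an even function, and every C² L-periodic function f satisfying -f'' + ωf - φ⁴f = λf for some λ < 0 is an even function. -/

import Mathlib

open Real Set Filter

/-- Forward scalar Gronwall: |h'| ≤ K|h|, h p = 0 implies h = 0 for x ≥ p. -/
lemma ode1_zero_fwd (K : ℝ) (h h1 : ℝ → ℝ) (hd : ∀ x, HasDerivAt h (h1 x) x)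
    (bnd : ∀ x, |h1 x| ≤ K * |h x|) (p : ℝ) (h0 : h p = 0) :
    ∀ x, p ≤ x → h x = 0 := by
  intro x hpx
  have hcont : Continuous h := by
    rw [continuous_iff_continuousAt]; exact fun t => (hd t).continuousAt
  have key := norm_le_gronwallBound_of_norm_deriv_right_le (f := h) (f' := h1)
    (δ := 0) (K := K) (ε := 0) (a := p) (b := x) hcont.continuousOn
    (fun t _ => (hd t).hasDerivWithinAt) (by simp [h0])
    (fun t _ => by simpa using bnd t)
  have := key x ⟨hpx, le_refl x⟩
  rw [gronwallBound_ε0_δ0] at this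
  simpa using le_antisymm this (abs_nonneg _)

lemma ode1_zero (K : ℝ) (h h1 : ℝ → ℝ) (hd : ∀ x, HasDerivAt h (h1 x) x)
    (bnd : ∀ x, |h1 x| ≤ K * |h x|) (p : ℝ) (h0 : h p = 0) :
    ∀ x, h x = 0 := by
  intro x
  rcases le_or_gt p x with hle | hlt
  · exact ode1_zero_fwd K h h1 hd bnd p h0 x hle
  · have hd' : ∀ t, HasDerivAt (fun t => h (2 * p - t)) (-h1 (2 * p - t)) t := by
      intro t
      have h2 : HasDerivAt (fun t : ℝ => 2 * p - t) (-1) t := by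
        simpa using (hasDerivAt_id t).const_sub (2 * p)
      have := (hd (2 * p - t)).comp t h2
      simp at this; exact this
    have hb : ∀ t, |(-h1 (2 * p - t))| ≤ K * |h (2 * p - t)| := by
      intro t; rw [abs_neg]; exact bnd _
    have := ode1_zero_fwd K (fun t => h (2 * p - t)) (fun t => -h1 (2 * p - t))
      hd' hb p (by show h (2*p-p) = 0; rw [show 2*p-p = p by ring]; exact h0) (2 * p - x) (by linarith)
    simpa using this

/-- Forward 2nd order linear ODE uniqueness via Gronwall on the system (h, h'). -/
lemma ode2_zero_fwd (W h h1 h2 : ℝ → ℝ) (hWc : Continuous W)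
    (hd1 : ∀ x, HasDerivAt h (h1 x) x) (hd2 : ∀ x, HasDerivAt h1 (h2 x) x)
    (hode : ∀ x, h2 x = W x * h x) (p : ℝ) (h0 : h p = 0) (h10 : h1 p = 0) :
    ∀ x, p ≤ x → h x = 0 := by
  intro x hpx
  obtain ⟨C, hC⟩ := (isCompact_Icc (a := p) (b := x)).exists_bound_of_continuousOn
    hWc.continuousOn
  set K := max 1 C with hK
  have hK1 : (1:ℝ) ≤ K := le_max_left _ _
  set v : ℝ → ℝ × ℝ := fun t => (h t, h1 t) with hv
  have hdv : ∀ t, HasDerivAt v (h1 t, h2 t) t := fun t => (hd1 t).prodMk (hd2 t)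
  have hcont : Continuous v := by
    rw [continuous_iff_continuousAt]; exact fun t => (hdv t).continuousAt
  have bnd : ∀ t ∈ Ico p x, ‖(h1 t, h2 t)‖ ≤ K * ‖v t‖ + 0 := by
    intro t ht
    rw [add_zero, Prod.norm_def, Prod.norm_def]
    have hvt : ‖v t‖ = max ‖h t‖ ‖h1 t‖ := by rw [Prod.norm_def]
    have h1le : ‖h1 t‖ ≤ K * (max ‖h t‖ ‖h1 t‖) := by
      calc ‖h1 t‖ ≤ max ‖h t‖ ‖h1 t‖ := le_max_right _ _
      _ ≤ K * (max ‖h t‖ ‖h1 t‖) := by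
          nlinarith [le_max_left ‖h t‖ ‖h1 t‖, norm_nonneg (h t), norm_nonneg (h1 t)]
    have h2le : ‖h2 t‖ ≤ K * (max ‖h t‖ ‖h1 t‖) := by
      have : ‖h2 t‖ = ‖W t‖ * ‖h t‖ := by rw [hode t, norm_mul]
      have hCt : ‖W t‖ ≤ C := hC t ⟨ht.1, ht.2.le⟩
      have : ‖h2 t‖ ≤ C * ‖h t‖ := by
        rw [this]; exact mul_le_mul_of_nonneg_right hCt (norm_nonneg _)
      calc ‖h2 t‖ ≤ C * ‖h t‖ := this
        _ ≤ K * ‖h t‖ := mul_le_mul_of_nonneg_right (le_max_right _ _) (norm_nonneg _)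
        _ ≤ K * (max ‖h t‖ ‖h1 t‖) := by
            apply mul_le_mul_of_nonneg_left (le_max_left _ _) (by linarith)
    simpa using max_le h1le h2le
  have key := norm_le_gronwallBound_of_norm_deriv_right_le (f := v)
    (f' := fun t => (h1 t, h2 t)) (δ := 0) (K := K) (ε := 0) (a := p) (b := x)
    hcont.continuousOn (fun t _ => (hdv t).hasDerivWithinAt)
    (by simp [hv, h0, h10, Prod.norm_def]) bnd
  have hvx := key x ⟨hpx, le_refl x⟩
  rw [gronwallBound_ε0_δ0] at hvx
  have : ‖h x‖ ≤ ‖v x‖ := by rw [Prod.norm_def]; exact le_max_left _ _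
  have : ‖h x‖ ≤ 0 := le_trans this hvx
  simpa using le_antisymm this (norm_nonneg _)

lemma ode2_zero (W h h1 h2 : ℝ → ℝ) (hWc : Continuous W)
    (hd1 : ∀ x, HasDerivAt h (h1 x) x) (hd2 : ∀ x, HasDerivAt h1 (h2 x) x)
    (hode : ∀ x, h2 x = W x * h x) (p : ℝ) (h0 : h p = 0) (h10 : h1 p = 0) :
    ∀ x, h x = 0 := by
  intro x
  rcases le_or_gt p x with hle | hlt
  · exact ode2_zero_fwd W h h1 h2 hWc hd1 hd2 hode p h0 h10 x hle
  · have hneg : ∀ t, HasDerivAt (fun t : ℝ => 2 * p - t) (-1) t := by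
      intro t; simpa using (hasDerivAt_id t).const_sub (2 * p)
    have hd1' : ∀ t, HasDerivAt (fun t => h (2 * p - t)) (-h1 (2 * p - t)) t := by
      intro t; have := (hd1 (2 * p - t)).comp t (hneg t); simp at this; exact this
    have hd2' : ∀ t, HasDerivAt (fun t => -h1 (2 * p - t)) (h2 (2 * p - t)) t := by
      intro t
      have := ((hd2 (2 * p - t)).comp t (hneg t)).neg
      simp at this; exact this
    have := ode2_zero_fwd (fun t => W (2 * p - t)) (fun t => h (2 * p - t))
      (fun t => -h1 (2 * p - t)) (fun t => h2 (2 * p - t))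
      (hWc.comp (by continuity)) hd1' hd2' (fun t => hode _) p
      (by show h (2*p-p) = 0; rw [show 2*p-p = p by ring]; exact h0)
      (by show -h1 (2*p-p) = 0; rw [show 2*p-p = p by ring, h10]; ring)
      (2 * p - x) (by linarith)
    simpa using this


set_option maxHeartbeats 2000000 in
theorem stmt_12 (L : ℝ) (hL : L > 2 * Real.pi) (ω : ℝ)
    (hω : ω ∈ Set.Ioo (4 * Real.pi ^ 2 / L ^ 2) 1)
    (φ : ℝ → ℝ) (hφsmooth : ContDiff ℝ (⊤ : ℕ∞) φ)
    (hφeven : ∀ x, φ (-x) = φ x)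
    (hφnc : ¬ ∃ k : ℝ, ∀ x, φ x = k)
    (hφper : Function.Periodic φ L)
    (hφzeros : ∃ z₁ z₂, z₁ ∈ Set.Ico (0 : ℝ) L ∧ z₂ ∈ Set.Ico (0 : ℝ) L ∧ z₁ ≠ z₂ ∧
      ∀ x ∈ Set.Ico (0 : ℝ) L, (φ x = 0 ↔ x = z₁ ∨ x = z₂))
    (hφode : ∀ x, -(deriv (deriv φ) x) + ω * φ x - φ x ^ 5 = 0) :
    (∀ f : ℝ → ℝ, ∀ lam : ℝ, lam < 0 →
      ContDiff ℝ 2 f → Function.Periodic f L →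
      (∀ x, -(deriv (deriv f) x) + ω * f x - 5 * φ x ^ 4 * f x = lam * f x) →
      ∀ x, f (-x) = f x) ∧
    (∀ f : ℝ → ℝ, ∀ lam : ℝ, lam < 0 →
      ContDiff ℝ 2 f → Function.Periodic f L →
      (∀ x, -(deriv (deriv f) x) + ω * f x - φ x ^ 4 * f x = lam * f x) →
      ∀ x, f (-x) = f x) := by
  -- basic positivity
  have hπ := Real.pi_pos
  have hL0 : 0 < L := by linarith
  have hL2 : 0 < L / 2 := by linarith
  have hω0 : 0 < ω := lt_trans (by positivity) hω.1
  -- derivatives of φ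
  set D1 : ℝ → ℝ := deriv φ with hD1def
  set D2 : ℝ → ℝ := deriv D1 with hD2def
  have hφdiff : Differentiable ℝ φ := hφsmooth.differentiable (by norm_num)
  have hD1smooth : ContDiff ℝ (⊤ : ℕ∞) D1 := (contDiff_infty_iff_deriv.mp hφsmooth).2
  have hD1diff : Differentiable ℝ D1 := hD1smooth.differentiable (by norm_num)
  have hdφ : ∀ x, HasDerivAt φ (D1 x) x := fun x => (hφdiff x).hasDerivAt
  have hdD1 : ∀ x, HasDerivAt D1 (D2 x) x := fun x => (hD1diff x).hasDerivAt
  have hφcont' : Continuous φ := hφdiff.continuous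
  have hD2eq : ∀ x, D2 x = ω * φ x - φ x ^ 5 := by
    intro x; have := hφode x; rw [hD2def, hD1def]; linarith
  have hD2cont : Continuous D2 := by
    have : D2 = fun x => ω * φ x - φ x ^ 5 := funext hD2eq
    rw [this]
    exact (continuous_const.mul hφcont').sub (hφcont'.pow 5)
  have hD1cont : Continuous D1 := hD1diff.continuous
  have hφcont : Continuous φ := hφdiff.continuous
  -- third derivative of φ via the ODE
  have hdD2 : ∀ x, HasDerivAt D2 ((ω - 5 * φ x ^ 4) * D1 x) x := by
    intro x
    have hform : D2 = fun x => ω * φ x - φ x ^ 5 := funext hD2eq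
    have h1 : HasDerivAt (fun x => ω * φ x - φ x ^ 5) (ω * D1 x - ↑(5:ℕ) * φ x ^ (5 - 1) * D1 x) x :=
      ((hdφ x).const_mul ω).sub ((hdφ x).pow 5)
    rw [hform]
    convert h1 using 1
    push_cast
    ring
  -- symmetry facts
  have hφLsub : ∀ x, φ (L - x) = φ x := by
    intro x
    have h1 : φ (-x + L) = φ (-x) := hφper (-x)
    rw [show L - x = -x + L by ring, h1, hφeven]
  have hD1odd : ∀ x, D1 (-x) = -D1 x := by
    intro x
    have hcomp : (fun y => φ (-y)) = φ := funext hφeven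
    have h := deriv_comp_neg φ x
    rw [hcomp] at h
    rw [hD1def]
    linarith
  have hD1zero : D1 0 = 0 := by
    have := hD1odd 0; simp at this; linarith
  have hD1half : D1 (L / 2) = 0 := by
    have hcomp : (fun y => φ (L - y)) = φ := funext hφLsub
    have h := deriv_comp_const_sub φ L (L / 2)
    rw [hcomp, show L - L / 2 = L / 2 by ring] at h
    rw [hD1def]
    linarith
  -- zeros of φ
  obtain ⟨z₁, z₂, hz₁, hz₂, hzne, hziff⟩ := hφzeros
  have hφz₁ : φ z₁ = 0 := (hziff z₁ hz₁).mpr (Or.inl rfl)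
  -- energy
  set E : ℝ → ℝ := fun x => D1 x ^ 2 / 2 - ω * φ x ^ 2 / 2 + φ x ^ 6 / 6 with hEdef
  have hEderiv : ∀ x, HasDerivAt E 0 x := by
    intro x
    have h1 := (((hdD1 x).pow 2).div_const 2).sub
      ((((hdφ x).pow 2).const_mul ω).div_const 2) |>.add (((hdφ x).pow 6).div_const 6)
    have hval : (↑(2:ℕ) * D1 x ^ (2 - 1) * D2 x / 2 - ω * (↑(2:ℕ) * φ x ^ (2 - 1) * D1 x) / 2 +
        ↑(6:ℕ) * φ x ^ (6 - 1) * D1 x / 6) = 0 := by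
      push_cast
      rw [hD2eq x]
      ring_nf
    rw [hEdef]
    rw [← hval]
    exact h1
  have hEconst : ∀ x y, E x = E y :=
    is_const_of_deriv_eq_zero (fun x => (hEderiv x).differentiableAt)
      (fun x => (hEderiv x).deriv)
  -- D1 z₁ ≠ 0 (else energy 0 and Gronwall kills φ)
  have hD1z₁ : D1 z₁ ≠ 0 := by
    intro h0
    have hE0 : ∀ x, E x = 0 := by
      intro x
      have := hEconst x z₁
      rw [this, hEdef]
      simp [hφz₁, h0]
    have bnd : ∀ x, |D1 x| ≤ Real.sqrt ω * |φ x| := by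
      intro x
      have hx := hE0 x
      rw [hEdef] at hx
      have hsq : D1 x ^ 2 ≤ ω * φ x ^ 2 := by nlinarith [pow_le_pow_left₀ (sq_nonneg (φ x)) (le_refl (φ x ^ 2)) 3, sq_nonneg (φ x ^ 3)]
      have h1 : |D1 x| = Real.sqrt (D1 x ^ 2) := (Real.sqrt_sq_eq_abs _).symm
      have h2 : Real.sqrt (D1 x ^ 2) ≤ Real.sqrt (ω * φ x ^ 2) := Real.sqrt_le_sqrt hsq
      have h3 : Real.sqrt (ω * φ x ^ 2) = Real.sqrt ω * |φ x| := by
        rw [Real.sqrt_mul hω0.le, Real.sqrt_sq_eq_abs]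
      rw [h1, ← h3]
      exact h2
    have := ode1_zero (Real.sqrt ω) φ D1 hdφ bnd z₁ hφz₁
    exact hφnc ⟨0, this⟩
  have hEpos : 0 < E z₁ := by
    have : E z₁ = D1 z₁ ^ 2 / 2 := by rw [hEdef]; simp [hφz₁]
    rw [this]; positivity
  -- each critical value: a = φ x ^ 2 satisfies a > 0, a^2 > 3ω, a^3/6 - ω a/2 = E z₁
  have hcrit : ∀ x, D1 x = 0 → 0 < φ x ^ 2 ∧ 3 * ω < (φ x ^ 2) ^ 2 ∧
      (φ x ^ 2) ^ 3 / 6 - ω * (φ x ^ 2) / 2 = E z₁ := by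
    intro x hx
    have hEx : (φ x ^ 2) ^ 3 / 6 - ω * (φ x ^ 2) / 2 = E z₁ := by
      rw [← hEconst x z₁]
      simp only [hEdef, hx]
      ring
    have ha0 : 0 ≤ φ x ^ 2 := sq_nonneg _
    have hmul : φ x ^ 2 * ((φ x ^ 2) ^ 2 - 3 * ω) = 6 * E z₁ := by linear_combination 6 * hEx
    have hane : 0 < φ x ^ 2 := by
      rcases eq_or_lt_of_le ha0 with h | h
      · exfalso
        rw [← h] at hmul
        simp at hmul
        linarith
      · exact h
    refine ⟨hane, ?_, hEx⟩
    have : (φ x ^ 2) ^ 2 - 3 * ω = 6 * E z₁ / (φ x ^ 2) := by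
      rw [eq_div_iff hane.ne']
      linear_combination hmul
    nlinarith [div_pos (by linarith : (0:ℝ) < 6 * E z₁) hane]
  -- equal squares at critical points
  have hcsq : ∀ x y, D1 x = 0 → D1 y = 0 → φ x ^ 2 = φ y ^ 2 := by
    intro x y hx hy
    obtain ⟨hax, hax2, haxE⟩ := hcrit x hx
    obtain ⟨hay, hay2, hayE⟩ := hcrit y hy
    set a := φ x ^ 2
    set b := φ y ^ 2
    have hfac : (a - b) * (a ^ 2 + a * b + b ^ 2 - 3 * ω) = 0 := by
      linear_combination 6 * haxE - 6 * hayE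
    have hpos : 0 < a ^ 2 + a * b + b ^ 2 - 3 * ω := by nlinarith [mul_pos hax hay]
    have := mul_eq_zero.mp hfac
    rcases this with h | h
    · linarith
    · linarith
  -- IVT helper
  have ivt : ∀ p q : ℝ, p < q → φ p * φ q < 0 → ∃ ζ ∈ Ioo p q, φ ζ = 0 := by
    intro p q hpq hsign
    rcases mul_neg_iff.mp hsign with ⟨hp, hq⟩ | ⟨hp, hq⟩
    · have h0 : (0:ℝ) ∈ Ioo (φ q) (φ p) := ⟨hq, hp⟩
      obtain ⟨ζ, hζ, hζ0⟩ := intermediate_value_Ioo' hpq.le hφcont'.continuousOn h0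
      exact ⟨ζ, hζ, hζ0⟩
    · have h0 : (0:ℝ) ∈ Ioo (φ p) (φ q) := ⟨hp, hq⟩
      obtain ⟨ζ, hζ, hζ0⟩ := intermediate_value_Ioo hpq.le hφcont'.continuousOn h0
      exact ⟨ζ, hζ, hζ0⟩
  -- between two critical points there is a zero of φ
  have zero_between : ∀ u v : ℝ, u < v → D1 u = 0 → D1 v = 0 →
      ∃ ζ ∈ Ioo u v, φ ζ = 0 := by
    intro u v huv hu hv
    have hsq : φ v ^ 2 = φ u ^ 2 := hcsq v u hv hu
    have hu2 := (hcrit u hu).1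
    have hune : φ u ≠ 0 := fun h => by rw [h] at hu2; simp at hu2
    have hfac : (φ v - φ u) * (φ v + φ u) = 0 := by linear_combination hsq
    rcases mul_eq_zero.mp hfac with hcase | hcase
    · -- φ v = φ u : interior extremum argument
      have hvu : φ v = φ u := by linarith
      obtain ⟨cm, hcmmem, hcmin⟩ := isCompact_Icc.exists_isMinOn
        (nonempty_Icc.mpr huv.le) hφcont'.continuousOn
      obtain ⟨cM, hcMmem, hcmax⟩ := isCompact_Icc.exists_isMaxOn
        (nonempty_Icc.mpr huv.le) hφcont'.continuousOn
      by_cases hconst : φ cm = φ cM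
      · -- φ is constant on [u,v]
        exfalso
        have hall : ∀ y ∈ Icc u v, φ y = φ u := by
          intro y hy
          have h1 : φ cm ≤ φ y := hcmin hy
          have h2 : φ y ≤ φ cM := hcmax hy
          have h3 : φ cm ≤ φ u := hcmin (left_mem_Icc.mpr huv.le)
          have h4 : φ u ≤ φ cM := hcmax (left_mem_Icc.mpr huv.le)
          rw [hconst] at h1 h3
          linarith
        set x₀ := (u + v) / 2 with hx₀
        have hx₀mem : x₀ ∈ Ioo u v := ⟨by rw [hx₀]; linarith, by rw [hx₀]; linarith⟩
        have hIoo : Ioo u v ∈ nhds x₀ := Ioo_mem_nhds hx₀mem.1 hx₀mem.2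
        have hD1Ioo : ∀ y ∈ Ioo u v, D1 y = 0 := by
          intro y hy
          have hev : φ =ᶠ[nhds y] (fun _ => φ u) := by
            filter_upwards [Ioo_mem_nhds hy.1 hy.2] with t ht
            exact hall t (Ioo_subset_Icc_self ht)
          have : deriv φ y = deriv (fun _ => φ u) y := hev.deriv_eq
          rw [hD1def, this, deriv_const]
        have hD2x₀ : D2 x₀ = 0 := by
          have hev : D1 =ᶠ[nhds x₀] (fun _ => 0) := by
            filter_upwards [hIoo] with t ht
            exact hD1Ioo t ht
          have : deriv D1 x₀ = deriv (fun _ => (0:ℝ)) x₀ := hev.deriv_eq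
          rw [hD2def, this, deriv_const]
        have hode := hφode x₀
        rw [hD2x₀] at hode
        have hφx₀ : φ x₀ = φ u := hall x₀ (Ioo_subset_Icc_self hx₀mem)
        rw [hφx₀] at hode
        have hωeq : ω = φ u ^ 4 := by
          have : φ u * (ω - φ u ^ 4) = 0 := by linarith [hode]; 
          rcases mul_eq_zero.mp this with h | h
          · exact absurd h hune
          · linarith
        have h3ω := (hcrit u hu).2.1
        nlinarith [h3ω, hωeq, hω0]
      · -- nonconstant : pick the extremum with value ≠ φ u
        have hkey : ∃ c, c ∈ Ioo u v ∧ D1 c = 0 ∧ φ c ≠ φ u := by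
          rcases ne_or_eq (φ cm) (φ u) with hne | heq
          · refine ⟨cm, ?_, ?_, hne⟩
            · rcases hcmmem.1.lt_or_eq with h1 | h1
              · rcases hcmmem.2.lt_or_eq with h2 | h2
                · exact ⟨h1, h2⟩
                · exact absurd (h2 ▸ hvu : φ cm = φ u) hne
              · exact absurd (h1 ▸ rfl : φ cm = φ u) hne
            · have hloc : IsLocalMin φ cm := by
                apply hcmin.isLocalMin
                apply Icc_mem_nhds
                · rcases hcmmem.1.lt_or_eq with h1 | h1
                  · exact h1
                  · exact absurd (h1 ▸ rfl : φ cm = φ u) hne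
                · rcases hcmmem.2.lt_or_eq with h2 | h2
                  · exact h2
                  · exact absurd (h2 ▸ hvu : φ cm = φ u) hne
              rw [hD1def]
              exact hloc.deriv_eq_zero
          · refine ⟨cM, ?_, ?_, ?_⟩
            · have hMne : φ cM ≠ φ u := fun h => hconst (heq.trans h.symm)
              rcases hcMmem.1.lt_or_eq with h1 | h1
              · rcases hcMmem.2.lt_or_eq with h2 | h2
                · exact ⟨h1, h2⟩
                · exact absurd (h2 ▸ hvu : φ cM = φ u) hMne
              · exact absurd (h1 ▸ rfl : φ cM = φ u) hMne
            · have hMne : φ cM ≠ φ u := fun h => hconst (heq.trans h.symm)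
              have hloc : IsLocalMax φ cM := by
                apply hcmax.isLocalMax
                apply Icc_mem_nhds
                · rcases hcMmem.1.lt_or_eq with h1 | h1
                  · exact h1
                  · exact absurd (h1 ▸ rfl : φ cM = φ u) hMne
                · rcases hcMmem.2.lt_or_eq with h2 | h2
                  · exact h2
                  · exact absurd (h2 ▸ hvu : φ cM = φ u) hMne
              rw [hD1def]
              exact hloc.deriv_eq_zero
            · exact fun h => hconst (heq.trans h.symm)
        obtain ⟨c, hcmem, hcD1, hcne⟩ := hkey
        have hsqc : φ c ^ 2 = φ u ^ 2 := hcsq c u hcD1 hu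
        have hfc : (φ c - φ u) * (φ c + φ u) = 0 := by linear_combination hsqc
        have hcval : φ c = -φ u := by
          rcases mul_eq_zero.mp hfc with h | h
          · exact absurd (by linarith) hcne
          · linarith
        have hprod : φ u * φ c < 0 := by
          rw [hcval]
          have : φ u ^ 2 > 0 := hu2
          nlinarith
        obtain ⟨ζ, hζ, hζ0⟩ := ivt u c hcmem.1 hprod
        exact ⟨ζ, ⟨hζ.1, lt_trans hζ.2 hcmem.2⟩, hζ0⟩
    · -- φ v = -φ u : sign change
      have hprod : φ u * φ v < 0 := by nlinarith [hu2]
      exact ivt u v huv hprod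
  -- step 1 : φ' does not vanish on (0, L/2)
  have step1 : ∀ m ∈ Ioo (0:ℝ) (L / 2), D1 m ≠ 0 := by
    intro m hm hm0
    obtain ⟨ζ₁, hζ₁mem, hζ₁⟩ := zero_between 0 m hm.1 hD1zero hm0
    obtain ⟨ζ₂, hζ₂mem, hζ₂⟩ := zero_between m (L / 2) hm.2 hm0 hD1half
    set ζ₃ := L - ζ₂ with hζ₃def
    have hζ₃ : φ ζ₃ = 0 := by rw [hζ₃def, hφLsub]; exact hζ₂
    have hord : 0 < ζ₁ ∧ ζ₁ < ζ₂ ∧ ζ₂ < ζ₃ ∧ ζ₃ < L := by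
      refine ⟨hζ₁mem.1, lt_trans hζ₁mem.2 hζ₂mem.1, ?_, ?_⟩
      · rw [hζ₃def]; have := hζ₂mem.2; linarith
      · rw [hζ₃def]; have := hζ₂mem.1; have := hm.1; linarith
    have h1 := (hziff ζ₁ ⟨hord.1.le, by linarith [hord.2.1, hord.2.2.1, hord.2.2.2]⟩).mp hζ₁
    have h2 := (hziff ζ₂ ⟨by linarith [hord.1, hord.2.1], by linarith [hord.2.2.1, hord.2.2.2]⟩).mp hζ₂
    have h3 := (hziff ζ₃ ⟨by linarith [hord.1, hord.2.1, hord.2.2.1], hord.2.2.2⟩).mp hζ₃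
    rcases h1 with h1 | h1 <;> rcases h2 with h2 | h2 <;> rcases h3 with h3 | h3 <;>
      [skip; skip; skip; skip; skip; skip; skip; skip] <;>
      first
        | (exfalso; rw [h1] at hord; rw [h2] at hord; linarith [hord.2.1])
        | (exfalso; rw [h2] at hord; rw [h3] at hord; linarith [hord.2.2.1])
        | (exfalso; rw [h1] at hord; rw [h3] at hord; linarith [hord.2.1, hord.2.2.1])
  -- dichotomy of sign of φ' on (0, L/2)
  have hD1ivt : ∀ p q : ℝ, p ∈ Ioo (0:ℝ) (L/2) → q ∈ Ioo (0:ℝ) (L/2) → p < q →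
      D1 p * D1 q < 0 → False := by
    intro p q hp hq hpq hsign
    rcases mul_neg_iff.mp hsign with ⟨h1, h2⟩ | ⟨h1, h2⟩
    · obtain ⟨ζ, hζ, hζ0⟩ := intermediate_value_Ioo' hpq.le hD1cont.continuousOn
        (⟨h2, h1⟩ : (0:ℝ) ∈ Ioo (D1 q) (D1 p))
      exact step1 ζ ⟨lt_trans hp.1 hζ.1, lt_trans hζ.2 hq.2⟩ hζ0
    · obtain ⟨ζ, hζ, hζ0⟩ := intermediate_value_Ioo hpq.le hD1cont.continuousOn
        (⟨h1, h2⟩ : (0:ℝ) ∈ Ioo (D1 p) (D1 q))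
      exact step1 ζ ⟨lt_trans hp.1 hζ.1, lt_trans hζ.2 hq.2⟩ hζ0
  have hdichot : (∀ x ∈ Ioo (0:ℝ) (L / 2), 0 < D1 x) ∨
      (∀ x ∈ Ioo (0:ℝ) (L / 2), D1 x < 0) := by
    have hq : L / 4 ∈ Ioo (0:ℝ) (L / 2) := ⟨by linarith, by linarith⟩
    rcases (step1 (L/4) hq).lt_or_gt with hneg | hpos
    · right
      intro x hx
      rcases (step1 x hx).lt_or_gt with h | h
      · exact h
      · exfalso
        rcases lt_trichotomy x (L/4) with hlt | heq | hgt
        · exact hD1ivt x (L/4) hx hq hlt (mul_neg_of_pos_of_neg h hneg)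
        · rw [heq] at h; linarith
        · exact hD1ivt (L/4) x hq hx hgt (mul_neg_of_neg_of_pos hneg h)
    · left
      intro x hx
      rcases (step1 x hx).lt_or_gt with h | h
      · exfalso
        rcases lt_trichotomy x (L/4) with hlt | heq | hgt
        · exact hD1ivt x (L/4) hx hq hlt (mul_neg_of_neg_of_pos h hpos)
        · rw [heq] at h; linarith
        · exact hD1ivt (L/4) x hq hx hgt (mul_neg_of_pos_of_neg hpos h)
      · exact h
  -- the Sturm comparison core
  have sturm : ∀ (c lam : ℝ), c ≤ 5 → lam < 0 → ∀ h h1 h2 : ℝ → ℝ,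
      (∀ x, HasDerivAt h (h1 x) x) → (∀ x, HasDerivAt h1 (h2 x) x) →
      (∀ x, h2 x = (ω - lam - c * φ x ^ 4) * h x) →
      h 0 = 0 → h (L / 2) = 0 → 0 < h1 0 → False := by
    intro c lam hc hlam h h1 h2 hd1 hd2 hode h00 hhalf hpos
    have hhc : Continuous h := by
      rw [continuous_iff_continuousAt]; exact fun t => (hd1 t).continuousAt
    have hh1c : Continuous h1 := by
      rw [continuous_iff_continuousAt]; exact fun t => (hd2 t).continuousAt
    -- h is positive on a right neighborhood of 0
    have hslope : Tendsto (slope h 0) (nhdsWithin 0 (Ioi 0)) (nhds (h1 0)) :=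
      (hasDerivAt_iff_tendsto_slope.mp (hd1 0)).mono_left
        (nhdsWithin_mono 0 (fun x hx => ne_of_gt hx))
    have hev : ∀ᶠ x in nhdsWithin 0 (Ioi 0), 0 < slope h 0 x :=
      hslope.eventually (eventually_gt_nhds hpos)
    obtain ⟨u, hu, hsub⟩ := mem_nhdsGT_iff_exists_Ioo_subset.mp hev
    set ε := min u (L / 2) with hεdef
    have hε0 : 0 < ε := lt_min hu hL2
    have hεL2 : ε ≤ L / 2 := min_le_right _ _
    have hpos₀ : ∀ x ∈ Ioo (0:ℝ) ε, 0 < h x := by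
      intro x hx
      have hx0 : 0 < x := hx.1
      have := hsub ⟨hx.1, lt_of_lt_of_le hx.2 (min_le_left _ _)⟩
      simp only [mem_setOf_eq, slope_def_field] at this
      rw [h00, sub_zero, sub_zero] at this
      have := mul_pos this hx0
      rwa [div_mul_cancel₀ _ (ne_of_gt hx0)] at this
    -- the first zero of h in (0, L/2]
    set S : Set ℝ := Icc (ε / 2) (L / 2) ∩ h ⁻¹' {0} with hSdef
    have hSne : S.Nonempty := ⟨L / 2, ⟨⟨by linarith, le_refl _⟩, by simpa using hhalf⟩⟩
    have hSbdd : BddBelow S := ⟨ε / 2, fun x hx => hx.1.1⟩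
    have hSclosed : IsClosed S := isClosed_Icc.inter (isClosed_singleton.preimage hhc)
    set a := sInf S with hadef
    have haS : a ∈ S := hSclosed.csInf_mem hSne hSbdd
    have ha1 : ε / 2 ≤ a := haS.1.1
    have ha2 : a ≤ L / 2 := haS.1.2
    have haz : h a = 0 := haS.2
    have hapos : 0 < a := lt_of_lt_of_le (by linarith) ha1
    have hhpos : ∀ x ∈ Ioo (0:ℝ) a, 0 < h x := by
      intro x hx
      by_cases hxε : x < ε
      · exact hpos₀ x ⟨hx.1, hxε⟩
      · push_neg at hxε
        have hxmem : x ∈ Icc (ε / 2) (L / 2) := ⟨by linarith, by linarith [hx.2, ha2]⟩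
        have hxne : h x ≠ 0 := by
          intro hhx
          have : a ≤ x := csInf_le hSbdd ⟨hxmem, by simpa using hhx⟩
          linarith [hx.2]
        rcases hxne.lt_or_gt with hneg | hposx
        · exfalso
          have hmid : 0 < h (ε / 2) := hpos₀ (ε / 2) ⟨by linarith, by linarith⟩
          have hlt : ε / 2 < x := by linarith
          obtain ⟨ζ, hζ, hζ0⟩ := intermediate_value_Ioo' hlt.le hhc.continuousOn
            (⟨hneg, hmid⟩ : (0:ℝ) ∈ Ioo (h x) (h (ε / 2)))
          have : a ≤ ζ := csInf_le hSbdd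
            ⟨⟨hζ.1.le, by linarith [hζ.2, hx.2, ha2]⟩, by simpa using hζ0⟩
          linarith [hζ.2, hx.2]
        · exact hposx
    -- h1 a ≤ 0
    have hh1a : h1 a ≤ 0 := by
      by_contra hcon
      push_neg at hcon
      have hslopea : Tendsto (slope h a) (nhdsWithin a (Iio a)) (nhds (h1 a)) :=
        (hasDerivAt_iff_tendsto_slope.mp (hd1 a)).mono_left
          (nhdsWithin_mono a (fun x hx => ne_of_lt hx))
      have heva : ∀ᶠ x in nhdsWithin a (Iio a), 0 < slope h a x :=
        hslopea.eventually (eventually_gt_nhds hcon)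
      have hmem : ∀ᶠ x in nhdsWithin a (Iio a), x ∈ Ioo (0:ℝ) a :=
        Filter.eventually_of_mem (Ioo_mem_nhdsLT_of_mem ⟨hapos, le_refl a⟩) (fun x hx => hx)
      obtain ⟨x, hx1, hx2⟩ := (heva.and hmem).exists
      rw [slope_def_field, haz, sub_zero] at hx1
      rcases div_pos_iff.mp hx1 with ⟨hn, hd⟩ | ⟨hn, hd⟩
      · linarith [hx2.2]
      · linarith [hhpos x hx2]
    -- Wronskian
    set W : ℝ → ℝ := fun x => h1 x * D1 x - h x * D2 x with hWdef
    have hWcont : Continuous W := (hh1c.mul hD1cont).sub (hhc.mul hD2cont)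
    have hWd : ∀ x, HasDerivAt W ((-lam + (5 - c) * φ x ^ 4) * (h x * D1 x)) x := by
      intro x
      have hcomp := ((hd2 x).mul (hdD1 x)).sub ((hd1 x).mul (hdD2 x))
      have : (h2 x * D1 x + h1 x * D2 x) - (h1 x * D2 x + h x * ((ω - 5 * φ x ^ 4) * D1 x))
          = (-lam + (5 - c) * φ x ^ 4) * (h x * D1 x) := by
        rw [hode x]; ring
      rw [this] at hcomp
      exact hcomp
    rcases hdichot with hD1pos | hD1neg
    · -- φ' > 0 on (0, L/2)
      have hD1a : 0 ≤ D1 a := by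
        rcases ha2.lt_or_eq with hlt | heq
        · exact (hD1pos a ⟨hapos, hlt⟩).le
        · rw [heq, hD1half]
      have hmono : StrictMonoOn W (Icc 0 a) := by
        apply strictMonoOn_of_deriv_pos (convex_Icc 0 a) hWcont.continuousOn
        intro x hx
        rw [interior_Icc] at hx
        rw [(hWd x).deriv]
        have hφ4 : 0 ≤ (5 - c) * φ x ^ 4 := mul_nonneg (by linarith) (by positivity)
        have hhd := mul_pos (hhpos x hx) (hD1pos x ⟨hx.1, lt_of_lt_of_le hx.2 ha2⟩)
        nlinarith
      have hW0a : W 0 < W a :=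
        hmono (left_mem_Icc.mpr hapos.le) (right_mem_Icc.mpr hapos.le) hapos
      have hW0 : W 0 = 0 := by rw [hWdef]; simp only []; rw [h00, hD1zero]; ring
      have hWa : W a ≤ 0 := by
        rw [hWdef]; simp only []; rw [haz]
        nlinarith [mul_nonneg (neg_nonneg.mpr hh1a) hD1a]
      linarith
    · -- φ' < 0 on (0, L/2)
      have hD1a : D1 a ≤ 0 := by
        rcases ha2.lt_or_eq with hlt | heq
        · exact (hD1neg a ⟨hapos, hlt⟩).le
        · rw [heq, hD1half]
      have hanti : StrictAntiOn W (Icc 0 a) := by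
        apply strictAntiOn_of_deriv_neg (convex_Icc 0 a) hWcont.continuousOn
        intro x hx
        rw [interior_Icc] at hx
        rw [(hWd x).deriv]
        have hφ4 : 0 ≤ (5 - c) * φ x ^ 4 := mul_nonneg (by linarith) (by positivity)
        have hhd := mul_pos (hhpos x hx) (neg_pos.mpr (hD1neg x ⟨hx.1, lt_of_lt_of_le hx.2 ha2⟩))
        nlinarith
      have hW0a : W a < W 0 :=
        hanti (left_mem_Icc.mpr hapos.le) (right_mem_Icc.mpr hapos.le) hapos
      have hW0 : W 0 = 0 := by rw [hWdef]; simp only []; rw [h00, hD1zero]; ring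
      have hWa : 0 ≤ W a := by
        rw [hWdef]; simp only []; rw [haz]
        nlinarith [mul_nonneg (neg_nonneg.mpr hh1a) (neg_nonneg.mpr hD1a)]
      linarith
  -- the key unified statement
  have key : ∀ (c lam : ℝ), c ≤ 5 → lam < 0 → ∀ f : ℝ → ℝ,
      ContDiff ℝ 2 f → Function.Periodic f L →
      (∀ x, deriv (deriv f) x = (ω - lam) * f x - c * φ x ^ 4 * f x) →
      ∀ x, f (-x) = f x := by
    intro c lam hc hlam f hf2 hfper hfode
    have hfd : Differentiable ℝ f := hf2.differentiable (by norm_num)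
    have hf2' : ContDiff ℝ ((1 : WithTop ℕ∞) + 1) f := by
      rw [show ((1 : WithTop ℕ∞) + 1) = (2 : WithTop ℕ∞) by norm_num]
      exact hf2
    have hFd : Differentiable ℝ (deriv f) :=
      ((contDiff_succ_iff_deriv.mp hf2').2.2).differentiable (by norm_num)
    set F : ℝ → ℝ := deriv f with hFdef
    set F2 : ℝ → ℝ := deriv F with hF2def
    have hdf : ∀ x, HasDerivAt f (F x) x := fun x => (hfd x).hasDerivAt
    have hdF : ∀ x, HasDerivAt F (F2 x) x := fun x => (hFd x).hasDerivAt
    set g : ℝ → ℝ := fun x => f x - f (-x) with hgdef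
    have hdg : ∀ x, HasDerivAt g (F x + F (-x)) x := by
      intro x
      have H : HasDerivAt (fun y : ℝ => f (-y)) (-F (-x)) x := by
        have := (hdf (-x)).comp x (hasDerivAt_neg x)
        simp at this; exact this
      have := (hdf x).sub H
      simp [sub_neg_eq_add] at this ⊢; exact this
    have hdg2 : ∀ x, HasDerivAt (fun x => F x + F (-x)) (F2 x - F2 (-x)) x := by
      intro x
      have H : HasDerivAt (fun y : ℝ => F (-y)) (-F2 (-x)) x := by
        have := (hdF (-x)).comp x (hasDerivAt_neg x)
        simp at this; exact this
      have := (hdF x).add H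
      simp [sub_eq_add_neg] at this ⊢; exact this
    have hgode : ∀ x, F2 x - F2 (-x) = (ω - lam - c * φ x ^ 4) * g x := by
      intro x
      have e1 := hfode x
      have e2 := hfode (-x)
      rw [hφeven] at e2
      simp only [hgdef]
      rw [e1, e2]
      ring
    have hg0 : g 0 = 0 := by simp [hgdef]
    have hgL2 : g (L / 2) = 0 := by
      have hper := hfper (-(L / 2))
      rw [show -(L / 2) + L = L / 2 by ring] at hper
      simp only [hgdef]
      rw [hper]
      ring
    have hWcont : Continuous (fun x => ω - lam - c * φ x ^ 4) := by
      apply Continuous.sub continuous_const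
      exact (continuous_const.mul (hφcont'.pow 4))
    have hzero : ∀ x, g x = 0 := by
      rcases lt_trichotomy (F 0 + F (-0)) 0 with hneg | hzero0 | hposd
      · exact ((sturm c lam hc hlam (fun x => -g x)
          (fun x => -(F x + F (-x))) (fun x => -(F2 x - F2 (-x)))
          (fun x => (hdg x).neg) (fun x => (hdg2 x).neg)
          (fun x => by show -(F2 x - F2 (-x)) = (ω - lam - c * φ x ^ 4) * (-g x); rw [hgode x]; ring)
          (by simp [hg0]) (by simp [hgL2]) (by beta_reduce; linarith)).elim)
      · exact ode2_zero (fun x => ω - lam - c * φ x ^ 4) g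
          (fun x => F x + F (-x)) (fun x => F2 x - F2 (-x)) hWcont hdg hdg2 hgode
          0 hg0 (by exact hzero0)
      · exact ((sturm c lam hc hlam g
          (fun x => F x + F (-x)) (fun x => F2 x - F2 (-x)) hdg hdg2 hgode
          hg0 hgL2 (by beta_reduce; linarith)).elim)
    intro x
    have hx := hzero (-x)
    simp only [hgdef, neg_neg] at hx
    linarith
  constructor
  · intro f lam hlam hf2 hfper hfode
    refine key 5 lam (by norm_num) hlam f hf2 hfper (fun x => ?_)
    have := hfode x; linarith
  · intro f lam hlam hf2 hfper hfode
    refine key 1 lam (by norm_num) hlam f hf2 hfper (fun x => ?_)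
    have := hfode x; linarith
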